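/- Let q₁, q₃ ∈ ℂ satisfy 1 + |q₁|² − |q₃|² > 0, and set ν₁ = −(1/2π)ln(1+|q₁|²), ν₃ = −(1/2π)ln(1+|q₁|²−|q₃|²), ν̂ = ν₃ − ν₁. Suppose ν̂ ≠ 0. Define β₁₂ = e^{3πi/4} e^{3πν̂/2} e^{2πν₁} √(2π) q₃ / ((e^{2πν̂}−1)Γ(−iν̂)) and β₂₁ = e^{−3πi/4} e^{3πν̂/2} √(2π) conj(q₃) / ((e^{2πν̂}−1)Γ(iν̂)). Then β₁₂·β₂₁ = ν̂. -/

import Mathlib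

open Complex

theorem gamma_prod (x : ℝ) (hx : x ≠ 0) :
    Complex.Gamma (Complex.I * x) * Complex.Gamma (-(Complex.I * x)) =
      Real.pi / ((x : ℂ) * Complex.sinh (Real.pi * x)) := by
  have hne : -(Complex.I * (x:ℂ)) ≠ 0 := by
    simp [Complex.ext_iff, hx]
  have h1 := Complex.Gamma_mul_Gamma_one_sub (Complex.I * x)
  have h2 : Complex.Gamma (1 - Complex.I * x) = -(Complex.I * x) * Complex.Gamma (-(Complex.I * x)) := by
    rw [← Complex.Gamma_add_one _ hne]; ring_nf
  have h3 : Complex.sin (Real.pi * (Complex.I * x)) = Complex.sinh (Real.pi * x) * Complex.I := by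
    rw [show (Real.pi : ℂ) * (Complex.I * x) = ((Real.pi : ℂ) * x) * Complex.I by ring,
      Complex.sin_mul_I]
  rw [h2, h3] at h1
  have hS : Complex.sinh ((Real.pi : ℂ) * x) ≠ 0 := by
    have hr : Real.sinh (Real.pi * x) ≠ 0 :=
      Real.sinh_ne_zero.mpr (mul_ne_zero Real.pi_ne_zero hx)
    have : ((Real.sinh (Real.pi * x) : ℝ) : ℂ) ≠ 0 := by exact_mod_cast hr
    rwa [Complex.ofReal_sinh, Complex.ofReal_mul] at this
  have hxc : (x : ℂ) ≠ 0 := by exact_mod_cast hx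
  rw [eq_div_iff (mul_ne_zero hS Complex.I_ne_zero)] at h1
  rw [eq_div_iff (mul_ne_zero hxc hS)]
  linear_combination h1 + Complex.Gamma (Complex.I * x) * Complex.Gamma (-(Complex.I * x)) *
    (x : ℂ) * Complex.sinh ((Real.pi : ℂ) * x) * Complex.I_sq


theorem beta_product (q₁ q₃ : ℂ) (ν₁ ν₃ νhat : ℝ) (β₁₂ β₂₁ : ℂ)
    (hq : 0 < 1 + ‖q₁‖ ^ 2 - ‖q₃‖ ^ 2)
    (hν₁ : ν₁ = -(1 / (2 * Real.pi)) * Real.log (1 + ‖q₁‖ ^ 2))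
    (hν₃ : ν₃ = -(1 / (2 * Real.pi)) *
      Real.log (1 + ‖q₁‖ ^ 2 - ‖q₃‖ ^ 2))
    (hνhat : νhat = ν₃ - ν₁) (hν : νhat ≠ 0)
    (hβ₁₂ : β₁₂ = Complex.exp (3 * Real.pi * Complex.I / 4) *
      (Real.exp (3 * Real.pi * νhat / 2) : ℂ) * (Real.exp (2 * Real.pi * ν₁) : ℂ) *
      (Real.sqrt (2 * Real.pi) : ℂ) * q₃ /
      (((Real.exp (2 * Real.pi * νhat) : ℂ) - 1) * Complex.Gamma (-(Complex.I * νhat))))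
    (hβ₂₁ : β₂₁ = Complex.exp (-(3 * Real.pi * Complex.I) / 4) *
      (Real.exp (3 * Real.pi * νhat / 2) : ℂ) * (Real.sqrt (2 * Real.pi) : ℂ) *
      (starRingEnd ℂ) q₃ /
      (((Real.exp (2 * Real.pi * νhat) : ℂ) - 1) * Complex.Gamma (Complex.I * νhat))) :
    β₁₂ * β₂₁ = (νhat : ℂ) := by
  -- basic positivity / exp-log facts
  have hA : Real.exp (-(2 * Real.pi * ν₁)) = 1 + ‖q₁‖ ^ 2 := by
    have hApos : (0:ℝ) < 1 + ‖q₁‖ ^ 2 := by positivity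
    rw [hν₁, show -(2 * Real.pi * (-(1 / (2 * Real.pi)) * Real.log (1 + ‖q₁‖ ^ 2)))
        = Real.log (1 + ‖q₁‖ ^ 2) by field_simp]
    exact Real.exp_log hApos
  have hB : Real.exp (-(2 * Real.pi * ν₃)) = 1 + ‖q₁‖ ^ 2 - ‖q₃‖ ^ 2 := by
    rw [hν₃, show -(2 * Real.pi * (-(1 / (2 * Real.pi)) *
        Real.log (1 + ‖q₁‖ ^ 2 - ‖q₃‖ ^ 2)))
        = Real.log (1 + ‖q₁‖ ^ 2 - ‖q₃‖ ^ 2) by field_simp]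
    exact Real.exp_log hq
  have hq3 : ‖q₃‖ ^ 2
      = Real.exp (-(2 * Real.pi * ν₁)) - Real.exp (-(2 * Real.pi * ν₃)) := by
    rw [hA, hB]; ring
  -- basic atoms
  set P : ℂ := (Real.exp (Real.pi * νhat / 2) : ℂ) with hP
  set E1 : ℂ := (Real.exp (2 * Real.pi * ν₁) : ℂ) with hE1
  have hPne : P ≠ 0 := by
    rw [hP]; exact_mod_cast (Real.exp_pos _).ne'
  have hE1ne : E1 ≠ 0 := by
    rw [hE1]; exact_mod_cast (Real.exp_pos _).ne'
  -- power facts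
  have expfact : ∀ n : ℕ, ((Real.exp (n * (Real.pi * νhat / 2)) : ℝ) : ℂ) = P ^ n := by
    intro n
    rw [Real.exp_nat_mul, hP]; push_cast; ring
  have f1 : ((Real.exp (3 * Real.pi * νhat / 2) : ℝ) : ℂ) = P ^ 3 := by
    rw [show 3 * Real.pi * νhat / 2 = (3:ℕ) * (Real.pi * νhat / 2) by push_cast; ring]
    exact expfact 3
  have f2 : ((Real.exp (2 * Real.pi * νhat) : ℝ) : ℂ) = P ^ 4 := by
    rw [show 2 * Real.pi * νhat = (4:ℕ) * (Real.pi * νhat / 2) by push_cast; ring]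
    exact expfact 4
  have f3 : Complex.sinh ((Real.pi : ℂ) * (νhat : ℂ)) = (P ^ 4 - 1) / (2 * P ^ 2) := by
    have e2 : ((Real.exp (Real.pi * νhat) : ℝ) : ℂ) = P ^ 2 := by
      rw [show Real.pi * νhat = (2:ℕ) * (Real.pi * νhat / 2) by push_cast; ring]
      exact expfact 2
    have : Complex.sinh ((Real.pi : ℂ) * (νhat : ℂ)) = ((Real.sinh (Real.pi * νhat) : ℝ) : ℂ) := by
      rw [Complex.ofReal_sinh]; push_cast; ring_nf
    rw [this, Real.sinh_eq, Real.exp_neg, Complex.ofReal_div, Complex.ofReal_sub,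
      Complex.ofReal_inv, e2, Complex.ofReal_ofNat]
    field_simp
  have f4 : q₃ * (starRingEnd ℂ) q₃ = (P ^ 4 - 1) / (E1 * P ^ 4) := by
    have h₃ : Real.exp (-(2 * Real.pi * ν₃))
        = Real.exp (-(2 * Real.pi * ν₁)) * Real.exp (-(2 * Real.pi * νhat)) := by
      rw [← Real.exp_add]; congr 1; rw [hνhat]; ring
    have hinv1 : ((Real.exp (-(2 * Real.pi * ν₁)) : ℝ) : ℂ) = E1⁻¹ := by
      rw [Real.exp_neg, hE1]; push_cast; ring
    have hinv2 : ((Real.exp (-(2 * Real.pi * νhat)) : ℝ) : ℂ) = (P ^ 4)⁻¹ := by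
      rw [Real.exp_neg, Complex.ofReal_inv, f2]
    rw [Complex.mul_conj, ← Complex.sq_norm, hq3, Complex.ofReal_sub, hinv1, h₃,
      Complex.ofReal_mul, hinv1, hinv2]
    field_simp
  have fc : Complex.exp (3 * Real.pi * Complex.I / 4) *
      Complex.exp (-(3 * Real.pi * Complex.I) / 4) = 1 := by
    rw [← Complex.exp_add]
    rw [show (3 * (Real.pi:ℂ) * Complex.I / 4 + -(3 * (Real.pi:ℂ) * Complex.I) / 4) = 0 by ring]
    exact Complex.exp_zero
  have fs : ((Real.sqrt (2 * Real.pi) : ℝ) : ℂ) * ((Real.sqrt (2 * Real.pi) : ℝ) : ℂ)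
      = ((2 * Real.pi : ℝ) : ℂ) := by
    rw [← Complex.ofReal_mul, Real.mul_self_sqrt (by positivity)]
  -- nonzero facts
  have hg1 : Complex.Gamma (Complex.I * (νhat : ℂ)) ≠ 0 := by
    apply Complex.Gamma_ne_zero
    intro m
    simp [Complex.ext_iff, hν]
  have hg2 : Complex.Gamma (-(Complex.I * (νhat : ℂ))) ≠ 0 := by
    apply Complex.Gamma_ne_zero
    intro m
    simp [Complex.ext_iff, hν]
  have hDne : ((Real.exp (2 * Real.pi * νhat) : ℝ) : ℂ) - 1 ≠ 0 := by
    rw [sub_ne_zero]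
    have : Real.exp (2 * Real.pi * νhat) ≠ 1 := by
      simp only [ne_eq, Real.exp_eq_one_iff]
      exact mul_ne_zero (by positivity) hν
    exact_mod_cast this
  have hxc : (νhat : ℂ) ≠ 0 := by exact_mod_cast hν
  have hπ : ((Real.pi : ℝ) : ℂ) ≠ 0 := by exact_mod_cast Real.pi_ne_zero
  -- assemble
  rw [hβ₁₂, hβ₂₁, div_mul_div_comm]
  rw [show (((Real.exp (2 * Real.pi * νhat) : ℝ) : ℂ) - 1) * Complex.Gamma (-(Complex.I * νhat)) *
      ((((Real.exp (2 * Real.pi * νhat) : ℝ) : ℂ) - 1) * Complex.Gamma (Complex.I * νhat))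
      = (((Real.exp (2 * Real.pi * νhat) : ℝ) : ℂ) - 1) ^ 2 *
        (Complex.Gamma (Complex.I * νhat) * Complex.Gamma (-(Complex.I * νhat))) by ring]
  rw [gamma_prod νhat hν]
  rw [f2] at hDne ⊢
  rw [f1, f3]
  have hD' : P ^ 4 - 1 ≠ 0 := hDne
  rw [div_eq_iff (mul_ne_zero (pow_ne_zero 2 hD') (div_ne_zero hπ (mul_ne_zero hxc
    (div_ne_zero hD' (mul_ne_zero two_ne_zero (pow_ne_zero 2 hPne))))))]
  have fs' : ((Real.sqrt (2 * Real.pi) : ℝ) : ℂ) * ((Real.sqrt (2 * Real.pi) : ℝ) : ℂ)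
      = 2 * (Real.pi : ℂ) := by rw [fs]; push_cast; ring
  have hQ : q₃ * (starRingEnd ℂ) q₃ * (E1 * P ^ 4) = P ^ 4 - 1 := by
    rw [f4]; field_simp
  have hR : (νhat : ℂ) * ((P ^ 4 - 1) ^ 2 *
      ((Real.pi : ℂ) / ((νhat : ℂ) * ((P ^ 4 - 1) / (2 * P ^ 2)))))
      = 2 * (Real.pi : ℂ) * P ^ 2 * (P ^ 4 - 1) := by
    field_simp
  rw [hR]
  linear_combination (P ^ 6 * E1 * ((Real.sqrt (2 * Real.pi) : ℝ) : ℂ) *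
      ((Real.sqrt (2 * Real.pi) : ℝ) : ℂ) * q₃ * (starRingEnd ℂ) q₃) * fc +
    (P ^ 6 * E1 * q₃ * (starRingEnd ℂ) q₃) * fs' + (2 * (Real.pi : ℂ) * P ^ 2) * hQ
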